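/- (Property 3) Let C be an initial configuration of the BRP in which every stack holds at least k blocks, and let 𝔅³ be the top k layers of C. Suppose (1) the block of minimum label (the target block) does not belong to 𝔅³, and (2) every badly placed block of 𝔅³ has a label strictly greater than the minimum label remaining in stack s after deleting the topmost k−1 blocks of s, for every stack s. Then every feasible move sequence for C contains at least k non-BG relocations of blocks of 𝔅³; that is, f_nonBG(𝔅³) ≥ k. -/

import Mathlib

/-- A configuration of the BRP: each stack holds a list of blocks, bottom to top. -/
abbrev Config (B S : ℕ) := Fin S → List (Fin B)

/-- Every block occurs exactly once among the stacks. -/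
def IsConfig {B S : ℕ} (C : Config B S) : Prop :=
  ∀ b : Fin B, (∑ s : Fin S, (C s).count b) = 1

/-- `a` lies strictly below `b` in stack `s` of `C`. -/
def StrictlyBelow {B S : ℕ} (C : Config B S) (s : Fin S) (a b : Fin B) : Prop :=
  ∃ i j : ℕ, i < j ∧ (C s)[i]? = some a ∧ (C s)[j]? = some b

/-- A block is badly placed if some smaller-labelled block lies below it in its stack. -/
def BadlyPlaced {B S : ℕ} (C : Config B S) (b : Fin B) : Prop :=
  ∃ s a, a < b ∧ StrictlyBelow C s a b

/-- Moves: retrieve the top block of a stack, or relocate the top block of one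
stack onto another stack. -/
inductive Move (S : ℕ) where
  | retrieve (s : Fin S)
  | relocate (src dst : Fin S)

def applyMove {B S : ℕ} (C : Config B S) : Move S → Config B S
  | .retrieve s => Function.update C s (C s).dropLast
  | .relocate src dst =>
    match (C src).getLast? with
    | some b =>
      let C' := Function.update C src (C src).dropLast
      Function.update C' dst (C' dst ++ [b])
    | none => C

def Enabled {B S : ℕ} (C : Config B S) : Move S → Prop
  | .retrieve s => ∃ b, (C s).getLast? = some b ∧ ∀ (s' : Fin S), ∀ b' ∈ C s', b ≤ b'
  | .relocate src dst => src ≠ dst ∧ C src ≠ []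

def play {B S : ℕ} (C : Config B S) : List (Move S) → Config B S
  | [] => C
  | m :: ms => play (applyMove C m) ms

def AllEnabled {B S : ℕ} (C : Config B S) : List (Move S) → Prop
  | [] => True
  | m :: ms => Enabled C m ∧ AllEnabled (applyMove C m) ms

/-- A feasible move sequence: every move is enabled and at the end all blocks
have been retrieved. -/
def Feasible {B S : ℕ} (C : Config B S) (ms : List (Move S)) : Prop :=
  AllEnabled C ms ∧ ∀ s, play C ms s = []

/-- `b` is the block moved by `m` (a relocation) performed in configuration `C`. -/
def MovedBlock {B S : ℕ} (C : Config B S) (m : Move S) (b : Fin B) : Prop :=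
  ∃ src dst, m = .relocate src dst ∧ src ≠ dst ∧ (C src).getLast? = some b

/-- The four types of relocation moves. -/
inductive MType where
  | BB | BG | GB | GG

/-- The relocation `m`, moving block `b` from configuration `C`, has the given type. -/
def MTypeOf {B S : ℕ} (C : Config B S) (m : Move S) (b : Fin B) : MType → Prop
  | .BB => BadlyPlaced C b ∧ BadlyPlaced (applyMove C m) b
  | .BG => BadlyPlaced C b ∧ ¬ BadlyPlaced (applyMove C m) b
  | .GB => ¬ BadlyPlaced C b ∧ BadlyPlaced (applyMove C m) b
  | .GG => ¬ BadlyPlaced C b ∧ ¬ BadlyPlaced (applyMove C m) b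

/-- `m` is a relocation of a block of `𝔅`. -/
def RelocIn {B S : ℕ} (𝔅 : Set (Fin B)) (C : Config B S) (m : Move S) : Prop :=
  ∃ b ∈ 𝔅, MovedBlock C m b

/-- `m` is a relocation of a block of `𝔅` of type `mt`. -/
def RelocTypeIn {B S : ℕ} (mt : MType) (𝔅 : Set (Fin B)) (C : Config B S) (m : Move S) : Prop :=
  ∃ b ∈ 𝔅, MovedBlock C m b ∧ MTypeOf C m b mt

/-- `m` is a non-BG relocation of a block of `𝔅`. -/
def RelocNonBGIn {B S : ℕ} (𝔅 : Set (Fin B)) (C : Config B S) (m : Move S) : Prop :=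
  ∃ b ∈ 𝔅, MovedBlock C m b ∧ ¬ MTypeOf C m b MType.BG

/-- Count the moves of a sequence satisfying `P` (evaluated in the configuration
in which each move is performed). -/
noncomputable def countMoves {B S : ℕ} (P : Config B S → Move S → Prop) :
    Config B S → List (Move S) → ℕ
  | _, [] => 0
  | C, m :: ms =>
    (@ite ℕ (P C m) (Classical.propDecidable _) 1 0) + countMoves P (applyMove C m) ms

/-- Minimum over feasible move sequences of the number of moves satisfying `P`. -/
noncomputable def fMin {B S : ℕ} (C : Config B S) (P : Config B S → Move S → Prop) : ℕ :=
  sInf { n | ∃ ms, Feasible C ms ∧ countMoves P C ms = n }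

/-- `f(𝔅)`: least number of relocations applied to blocks of `𝔅`. -/
noncomputable def fRel {B S : ℕ} (C : Config B S) (𝔅 : Set (Fin B)) : ℕ :=
  fMin C (RelocIn 𝔅)

/-- `f_mt(𝔅)`: least number of type-`mt` relocations applied to blocks of `𝔅`. -/
noncomputable def fTyp {B S : ℕ} (C : Config B S) (mt : MType) (𝔅 : Set (Fin B)) : ℕ :=
  fMin C (RelocTypeIn mt 𝔅)

/-- `f_nonBG(𝔅)`: least number of non-BG relocations applied to blocks of `𝔅`. -/
noncomputable def fNonBG {B S : ℕ} (C : Config B S) (𝔅 : Set (Fin B)) : ℕ :=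
  fMin C (RelocNonBGIn 𝔅)

/-- The top 1st layer: the topmost block of each stack. -/
def TopLayer {B S : ℕ} (C : Config B S) : Set (Fin B) :=
  {b | ∃ s, (C s).getLast? = some b}

/-- The top `k` layers: the topmost `k` blocks of every stack. -/
def TopK {B S : ℕ} (C : Config B S) (k : ℕ) : Set (Fin B) :=
  {b | ∃ s, b ∈ (C s).drop ((C s).length - k)}

/-- The top `j`-th layer: the `j`-th block from the top of every stack. -/
def TopJth {B S : ℕ} (C : Config B S) (j : ℕ) : Set (Fin B) :=
  {b | ∃ s, (C s)[(C s).length - j]? = some b}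

/-- A virtual layer: a set of blocks containing exactly one block from each stack. -/
def VirtualLayer {B S : ℕ} (C : Config B S) (V : Set (Fin B)) : Prop :=
  ∀ s : Fin S, ∃! b : Fin B, b ∈ V ∧ b ∈ C s

/-- `a` lies at or below the `V`-block of stack `s`. -/
def AtOrBelowLayer {B S : ℕ} (C : Config B S) (V : Set (Fin B)) (s : Fin S) (a : Fin B) : Prop :=
  ∃ b j, b ∈ V ∧ (C s)[j]? = some b ∧ a ∈ (C s).take (j + 1)

/-- `V` is a virtual layer satisfying the conditions of Property 5:
(1) in some stack, a block strictly below the `V`-block of that stack has a smaller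
label than every block of `V`; (2) every badly placed block of `V` has a label
strictly greater than the minimum label present in stack `s` after deleting all
blocks strictly above the `V`-block of `s`, for every stack `s`. -/
def P5 {B S : ℕ} (C : Config B S) (V : Set (Fin B)) : Prop :=
  VirtualLayer C V ∧
  (∃ s a b, b ∈ V ∧ StrictlyBelow C s a b ∧ ∀ c ∈ V, a < c) ∧
  (∀ b ∈ V, BadlyPlaced C b → ∀ s : Fin S, ∃ a, AtOrBelowLayer C V s a ∧ a < b)

/-- A pair of virtual layers `V₁` (upper), `V₂` (lower) with shared well-placed
block `bstar` satisfying the conditions of Property 7. -/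
def P7 {B S : ℕ} (C : Config B S) (V₁ V₂ : Set (Fin B)) (bstar : Fin B) : Prop :=
  V₁ ∩ V₂ = {bstar} ∧
  ¬ BadlyPlaced C bstar ∧
  (∀ s : Fin S, bstar ∉ C s →
    ∃ b₁ b₂, b₁ ∈ V₁ ∧ b₂ ∈ V₂ ∧ StrictlyBelow C s b₂ b₁) ∧
  P5 C V₁ ∧ P5 C V₂ ∧
  (∀ s : Fin S, ∃ a, AtOrBelowLayer C V₁ s a ∧ a ≤ bstar) ∧
  (∃ s : Fin S, ∀ a, AtOrBelowLayer C V₁ s a → bstar ≤ a)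

/-- Push blocks one by one onto the indicated stacks. -/
def pushAll {B S : ℕ} (C : Config B S) : List (Fin B × Fin S) → Config B S
  | [] => C
  | p :: rest => pushAll (Function.update C p.2 (C p.2 ++ [p.1])) rest

/-- The blocks lying strictly above position `i` of stack `s`, listed from the
top of the stack downward (the processing order of the experiment). -/
def aboveList {B S : ℕ} (C : Config B S) (s : Fin S) (i : ℕ) : List (Fin B) :=
  ((C s).drop (i + 1)).reverse

/-- The arrangement resulting from the experiment of Property 4: the blocks above
position `i` of stack `s` are relocated exactly once, from the top downward, onto
the stacks listed in `ds`. -/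
def expResult {B S : ℕ} (C : Config B S) (s : Fin S) (i : ℕ) (ds : List (Fin S)) :
    Config B S :=
  pushAll (Function.update C s ((C s).take (i + 1))) ((aboveList C s i).zip ds)

/-- The condition of Property 4 (target block at position `i` of stack `sStar`):
in every experiment, some relocated block ends badly placed. -/
def P4Cond {B S : ℕ} (C : Config B S) (sStar : Fin S) (i : ℕ) : Prop :=
  ∀ ds : List (Fin S), ds.length = (aboveList C sStar i).length →
    (∀ d ∈ ds, d ≠ sStar) →
    ∃ b ∈ aboveList C sStar i, BadlyPlaced (expResult C sStar i ds) b

/-- The set `𝔅⁴`: the blocks above the target block together with, for each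
nonempty stack other than the target's stack, its block of minimum label. -/
def B4Set {B S : ℕ} (C : Config B S) (sStar : Fin S) (i : ℕ) : Set (Fin B) :=
  {b | b ∈ aboveList C sStar i} ∪
  {b | ∃ s, s ≠ sStar ∧ b ∈ C s ∧ ∀ b' ∈ C s, b ≤ b'}

/-- The number of direct blockages: adjacent pairs in a stack whose upper block
has a strictly larger label. -/
def directBlockages {B S : ℕ} (C : Config B S) : ℕ :=
  ∑ s : Fin S, (((C s).zip (C s).tail).filter (fun p => decide (p.1 < p.2))).length

/-- The number of relocations in a move sequence. -/
def relocCount {S : ℕ} (ms : List (Move S)) : ℕ :=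
  (ms.filter (fun m => match m with | Move.relocate _ _ => true | Move.retrieve _ => false)).length

/-- The minimum number of relocations over all feasible move sequences. -/
noncomputable def fAll {B S : ℕ} (C : Config B S) : ℕ :=
  sInf { n | ∃ ms, Feasible C ms ∧ relocCount ms = n }

/-- `g(L)`: `L` plus the minimum number of direct blockages over all partial
plans with exactly `L` relocations. -/
noncomputable def gIter {B S : ℕ} (C : Config B S) (L : ℕ) : ℕ :=
  L + sInf { d | ∃ ms : List (Move S), AllEnabled C ms ∧ relocCount ms = L ∧
      d = directBlockages (play C ms) }


/-! ### Auxiliary lemmas -/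

section Aux

variable {B S : ℕ}

private lemma mem_of_getElem?' {α : Type*} {l : List α} {i : ℕ} {a : α}
    (h : l[i]? = some a) : a ∈ l := by
  obtain ⟨hi, rfl⟩ := List.getElem?_eq_some_iff.1 h
  exact l.getElem_mem hi

private lemma pfx_getElem? {α : Type*} {p l : List α} (h : p <+: l) {i : ℕ} {a : α}
    (hi : p[i]? = some a) : l[i]? = some a := by
  obtain ⟨r, rfl⟩ := h
  have hlt : i < p.length := by
    obtain ⟨h', _⟩ := List.getElem?_eq_some_iff.1 hi
    exact h'
  rw [List.getElem?_append_left hlt]; exact hi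

private lemma take_getElem? {α : Type*} {l : List α} {n i : ℕ} (h : i < n) :
    (l.take n)[i]? = l[i]? := by
  rw [List.getElem?_take]; simp [h]

private lemma getElem?_unique {α : Type*} [DecidableEq α] {l : List α} {x : α} (hc : l.count x ≤ 1)
    {i j : ℕ} (hi : l[i]? = some x) (hj : l[j]? = some x) : i = j := by
  by_contra hne
  wlog hij : i < j generalizing i j
  · exact this hj hi (Ne.symm hne) (by omega)
  have hdup : List.Sublist [x, x] l := by
    have h1 : List.Sublist [x] (l.take (i + 1)) := by
      rw [List.singleton_sublist]
      have hd : (l.take (i + 1))[i]? = some x := by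
        rw [take_getElem? (Nat.lt_succ_self i)]; exact hi
      exact mem_of_getElem?' hd
    have h2 : List.Sublist [x] (l.drop (i + 1)) := by
      rw [List.singleton_sublist]
      have hd : (l.drop (i + 1))[j - (i + 1)]? = some x := by
        rw [List.getElem?_drop]
        have : i + 1 + (j - (i + 1)) = j := by omega
        rw [this]; exact hj
      exact mem_of_getElem?' hd
    have := List.Sublist.append h1 h2
    rwa [List.take_append_drop] at this
  have : 2 ≤ l.count x := List.duplicate_iff_two_le_count.1
    (List.duplicate_iff_sublist.2 hdup)
  omega

private lemma take_prefix_take {α : Type*} {l : List α} {m n : ℕ} (h : m ≤ n) :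
    l.take m <+: l.take n := by
  have : (l.take n).take m = l.take m := by
    rw [List.take_take]; congr 1; omega
  rw [← this]; exact List.take_prefix _ _

private lemma length_eq_sum_count (l : List (Fin B)) :
    l.length = ∑ x : Fin B, l.count x := by
  induction l with
  | nil => simp
  | cons a l ih =>
    simp only [List.count_cons, List.length_cons, ih, Finset.sum_add_distrib]
    have : (∑ x : Fin B, if a == x then 1 else 0) = 1 := by
      simp only [beq_iff_eq]
      rw [Finset.sum_ite_eq Finset.univ a (fun _ => 1)]
      simp
    omega

/-- Total number of occurrences of a block over all stacks. -/
def cnt (D : Config B S) (x : Fin B) : ℕ := ∑ s, (D s).count x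

private lemma cnt_update (D : Config B S) (s0 : Fin S) (l : List (Fin B)) (x : Fin B) :
    cnt (Function.update D s0 l) x + (D s0).count x = cnt D x + l.count x := by
  unfold cnt
  rw [← Finset.add_sum_erase _ _ (Finset.mem_univ s0),
      ← Finset.add_sum_erase _ (fun s => (D s).count x) (Finset.mem_univ s0)]
  have h1 : Function.update D s0 l s0 = l := Function.update_self _ _ _
  have h2 : ∀ s ∈ Finset.univ.erase s0,
      (Function.update D s0 l s).count x = (D s).count x := by
    intro s hs
    rw [Function.update_of_ne (Finset.ne_of_mem_erase hs)]
  rw [h1, Finset.sum_congr rfl h2]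
  omega

private lemma count_le_cnt (D : Config B S) (s : Fin S) (x : Fin B) :
    (D s).count x ≤ cnt D x :=
  Finset.single_le_sum (f := fun u => (D u).count x) (fun _ _ => Nat.zero_le _) (Finset.mem_univ s)

private lemma mem_stack_unique {D : Config B S} (hcnt : ∀ x, cnt D x ≤ 1)
    {x : Fin B} {s s' : Fin S} (h1 : x ∈ D s) (h2 : x ∈ D s') : s = s' := by
  by_contra hne
  have c1 : 1 ≤ (D s).count x := List.count_pos_iff.2 h1
  have c2 : 1 ≤ (D s').count x := List.count_pos_iff.2 h2
  have : (D s).count x + (D s').count x ≤ cnt D x := by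
    unfold cnt
    calc (D s).count x + (D s').count x = ∑ u ∈ ({s, s'} : Finset (Fin S)), (D u).count x := by
          rw [Finset.sum_pair hne]
      _ ≤ _ := Finset.sum_le_sum_of_subset (Finset.subset_univ _)
  have := hcnt x
  omega

private lemma getLast?_some_split {α : Type*} {l : List α} {b : α}
    (h : l.getLast? = some b) : l = l.dropLast ++ [b] := by
  have hne : l ≠ [] := by rintro rfl; simp at h
  have := List.getLast?_eq_getLast hne
  rw [this] at h
  have hb : l.getLast hne = b := by injection h
  rw [← hb]; exact (List.dropLast_append_getLast hne).symm

private lemma relocate_src {D : Config B S} {src dst : Fin S} {b : Fin B}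
    (hne : src ≠ dst) (hb : (D src).getLast? = some b) :
    applyMove D (.relocate src dst) src = (D src).dropLast := by
  simp only [applyMove, hb]
  rw [Function.update_of_ne hne, Function.update_self]

private lemma relocate_dst {D : Config B S} {src dst : Fin S} {b : Fin B}
    (hne : src ≠ dst) (hb : (D src).getLast? = some b) :
    applyMove D (.relocate src dst) dst = D dst ++ [b] := by
  simp only [applyMove, hb]
  rw [Function.update_self, Function.update_of_ne (Ne.symm hne)]

private lemma relocate_other {D : Config B S} {src dst e : Fin S} {b : Fin B}
    (he1 : e ≠ src) (he2 : e ≠ dst) (hb : (D src).getLast? = some b) :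
    applyMove D (.relocate src dst) e = D e := by
  simp only [applyMove, hb]
  rw [Function.update_of_ne he2, Function.update_of_ne he1]

private lemma cnt_relocate {D : Config B S} {src dst : Fin S} {b : Fin B}
    (hne : src ≠ dst) (hb : (D src).getLast? = some b) (x : Fin B) :
    cnt (applyMove D (.relocate src dst)) x = cnt D x := by
  have hsplit : (D src).count x = (D src).dropLast.count x + ([b] : List (Fin B)).count x := by
    conv_lhs => rw [getLast?_some_split hb]
    rw [List.count_append]
  simp only [applyMove, hb]
  set C1 := Function.update D src (D src).dropLast with hC1
  have e1 : cnt C1 x + (D src).count x = cnt D x + (D src).dropLast.count x :=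
    cnt_update D src _ x
  have hc1dst : C1 dst = D dst := by
    rw [hC1, Function.update_of_ne (Ne.symm hne)]
  have e2 : cnt (Function.update C1 dst (C1 dst ++ [b])) x + (C1 dst).count x
      = cnt C1 x + (C1 dst ++ [b]).count x := cnt_update C1 dst _ x
  rw [List.count_append] at e2
  omega

private lemma play_append (D : Config B S) (a b : List (Move S)) :
    play D (a ++ b) = play (play D a) b := by
  induction a generalizing D with
  | nil => rfl
  | cons m ms ih => simp only [List.cons_append, play]; exact ih _

private lemma allEnabled_append {D : Config B S} {a b : List (Move S)}
    (ha : AllEnabled D a) (hb : AllEnabled (play D a) b) : AllEnabled D (a ++ b) := by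
  induction a generalizing D with
  | nil => exact hb
  | cons m ms ih =>
    exact ⟨ha.1, ih ha.2 hb⟩

private lemma sumLen_eq_sum_cnt (D : Config B S) :
    (∑ s, (D s).length) = ∑ x, cnt D x := by
  unfold cnt
  rw [Finset.sum_comm]
  exact Finset.sum_congr rfl fun s _ => length_eq_sum_count (D s)

end Aux


section Feas

variable {B S : ℕ}

private lemma step_lemma (hS : 2 ≤ S) :
    ∀ L : ℕ, ∀ D : Config B S, (∀ x, cnt D x ≤ 1) →
    ∀ b : Fin B, ∀ s0 : Fin S, b ∈ D s0 → (∀ s' : Fin S, ∀ b' ∈ D s', b ≤ b') →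
    (D s0).length ≤ L →
    ∃ ms, AllEnabled D ms ∧ (∀ x, cnt (play D ms) x ≤ 1) ∧
      (∑ s, ((play D ms) s).length) < ∑ s, (D s).length := by
  intro L
  induction L with
  | zero =>
    intro D _ b s0 hb _ hlen
    have := List.length_pos_iff.2 (List.ne_nil_of_mem hb)
    omega
  | succ L IH =>
    intro D hcnt b s0 hb hmin hlen
    have hne0 : D s0 ≠ [] := List.ne_nil_of_mem hb
    obtain ⟨c, hc⟩ : ∃ c, (D s0).getLast? = some c := by
      cases h : (D s0).getLast? with
      | none => exact absurd (List.getLast?_eq_none_iff.1 h) hne0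
      | some c => exact ⟨c, rfl⟩
    by_cases hcb : c = b
    · -- retrieve b from s0
      subst hcb
      refine ⟨[.retrieve s0], ⟨⟨c, hc, hmin⟩, trivial⟩, ?_, ?_⟩
      · intro x
        have e1 := cnt_update D s0 (D s0).dropLast x
        have hcount : (D s0).count x = (D s0).dropLast.count x
            + ([c] : List (Fin B)).count x := by
          conv_lhs => rw [getLast?_some_split hc]
          rw [List.count_append]
        have := hcnt x
        simp only [play, applyMove]
        omega
      · simp only [play, applyMove]
        rw [← Finset.add_sum_erase _ _ (Finset.mem_univ s0),
            ← Finset.add_sum_erase _ (fun s => (D s).length) (Finset.mem_univ s0)]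
        have h2 : ∀ s ∈ Finset.univ.erase s0,
            ((Function.update D s0 (D s0).dropLast) s).length = (D s).length := by
          intro s hs
          rw [Function.update_of_ne (Finset.ne_of_mem_erase hs)]
        rw [Finset.sum_congr rfl h2, Function.update_self]
        have : (D s0).dropLast.length < (D s0).length := by
          rw [List.length_dropLast]
          have := List.length_pos_iff.2 hne0
          omega
        omega
    · -- relocate c from s0 elsewhere
      obtain ⟨s1, hs1⟩ : ∃ s1 : Fin S, s1 ≠ s0 :=
        Fintype.exists_ne_of_one_lt_card (by rw [Fintype.card_fin]; omega) s0
      have hEn : Enabled D (.relocate s0 s1) := ⟨Ne.symm hs1, hne0⟩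
      set D' := applyMove D (.relocate s0 s1) with hD'
      have hsrc : D' s0 = (D s0).dropLast := relocate_src (Ne.symm hs1) hc
      have hdst : D' s1 = D s1 ++ [c] := relocate_dst (Ne.symm hs1) hc
      have hoth : ∀ e, e ≠ s0 → e ≠ s1 → D' e = D e :=
        fun e h1 h2 => relocate_other h1 h2 hc
      have hcnt' : ∀ x, cnt D' x = cnt D x := cnt_relocate (Ne.symm hs1) hc
      have hb' : b ∈ D' s0 := by
        rw [hsrc]
        have : b ∈ (D s0).dropLast ++ [c] := by rw [← getLast?_some_split hc]; exact hb
        rcases List.mem_append.1 this with h | h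
        · exact h
        · simp at h; exact absurd h.symm hcb
      have hmin' : ∀ s' : Fin S, ∀ b' ∈ D' s', b ≤ b' := by
        intro s' b' hb'
        by_cases h0 : s' = s0
        · subst h0; rw [hsrc] at hb'
          exact hmin _ b' (List.mem_of_mem_dropLast hb')
        · by_cases h1 : s' = s1
          · subst h1; rw [hdst] at hb'
            rcases List.mem_append.1 hb' with h | h
            · exact hmin _ b' h
            · simp at h; subst h
              exact hmin s0 b' (List.mem_of_mem_getLast? hc)
          · rw [hoth s' h0 h1] at hb'; exact hmin s' b' hb'
      have hlen' : (D' s0).length ≤ L := by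
        rw [hsrc, List.length_dropLast]; omega
      obtain ⟨ms, hA, hc2, hN⟩ := IH D' (fun x => by rw [hcnt' x]; exact hcnt x)
        b s0 hb' hmin' hlen'
      refine ⟨.relocate s0 s1 :: ms, ⟨hEn, hA⟩, hc2, ?_⟩
      have hNeq : (∑ s, (D' s).length) = ∑ s, (D s).length := by
        rw [sumLen_eq_sum_cnt, sumLen_eq_sum_cnt]
        exact Finset.sum_congr rfl fun x _ => hcnt' x
      simp only [play]
      rw [← hD', ← hNeq]
      exact hN

private lemma exists_feasible (hS : 2 ≤ S) :
    ∀ n : ℕ, ∀ D : Config B S, (∀ x, cnt D x ≤ 1) → (∑ s, (D s).length) ≤ n →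
    ∃ ms, Feasible D ms := by
  intro n
  induction n with
  | zero =>
    intro D _ hn
    refine ⟨[], trivial, fun s => ?_⟩
    have : (D s).length = 0 := by
      have : (D s).length ≤ ∑ u, (D u).length :=
        Finset.single_le_sum (f := fun u => (D u).length)
          (fun _ _ => Nat.zero_le _) (Finset.mem_univ s)
      omega
    exact List.length_eq_zero_iff.1 this
  | succ n IH =>
    intro D hcnt hn
    by_cases hN : (∑ s, (D s).length) = 0
    · exact IH D hcnt (by omega)
    · -- find the minimal present block
      have hex : ∃ x : Fin B, ∃ s : Fin S, x ∈ D s := by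
        by_contra h
        push_neg at h
        apply hN
        rw [sumLen_eq_sum_cnt]
        refine Finset.sum_eq_zero fun x _ => ?_
        unfold cnt
        refine Finset.sum_eq_zero fun s _ => ?_
        rw [List.count_eq_zero]
        exact h x s
      set F : Finset (Fin B) := Finset.univ.filter (fun x => ∃ s, x ∈ D s) with hF
      have hFne : F.Nonempty := by
        obtain ⟨x, s, hx⟩ := hex
        exact ⟨x, by simp [hF]; exact ⟨s, hx⟩⟩
      set b := F.min' hFne with hbdef
      have hbF : b ∈ F := F.min'_mem hFne
      obtain ⟨s0, hbs0⟩ : ∃ s, b ∈ D s := by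
        have := hbF; rw [hF] at this; simpa using this
      have hmin : ∀ s' : Fin S, ∀ b' ∈ D s', b ≤ b' := by
        intro s' b' hb'
        exact F.min'_le b' (by simp [hF]; exact ⟨s', hb'⟩)
      obtain ⟨ms1, hA1, hc1, hN1⟩ :=
        step_lemma hS (D s0).length D hcnt b s0 hbs0 hmin le_rfl
      obtain ⟨ms2, hA2, hP2⟩ := IH (play D ms1) hc1 (by omega)
      refine ⟨ms1 ++ ms2, allEnabled_append hA1 hA2, fun s => ?_⟩
      rw [play_append]
      exact hP2 s

end Feas


section Key

variable {B S : ℕ}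

private lemma key_lemma (C : Config B S) (k : ℕ) (hk : ∀ s, k ≤ (C s).length)
    (t : Fin B) (ht : ∀ b, t ≤ b) (s0 : Fin S) (it : ℕ)
    (hit : (C s0)[it]? = some t) (hitlt : it < (C s0).length - k)
    (hcond : ∀ b ∈ TopK C k, BadlyPlaced C b →
      ∀ s : Fin S, ∃ a ∈ (C s).take ((C s).length - (k - 1)), a < b) :
    ∀ ms : List (Move S), ∀ J : Finset ℕ, J ⊆ Finset.Icc 1 k → ∀ D : Config B S,
      (∀ x, cnt D x ≤ 1) →
      (∀ j ∈ J, ∀ e, (C e).take ((C e).length - j + 1) <+: D e) →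
      AllEnabled D ms → (∀ s, play D ms s = []) →
      J.card ≤ countMoves (RelocNonBGIn (TopK C k)) D ms := by
  intro ms
  induction ms with
  | nil =>
    intro J hJ D _ hpre _ hend
    rcases Finset.eq_empty_or_nonempty J with rfl | ⟨j, hj⟩
    · simp
    exfalso
    have h1 := hpre j hj s0
    have hjk := Finset.mem_Icc.1 (hJ hj)
    have hks0 := hk s0
    have hD : D s0 = [] := hend s0
    rw [hD] at h1
    have h2 : (C s0).take ((C s0).length - j + 1) = [] := List.prefix_nil.1 h1
    have h3 := congrArg List.length h2
    rw [List.length_take] at h3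
    simp only [List.length_nil] at h3
    omega
  | cons m ms IH =>
    intro J hJ D hcnt hpre hen hend
    rcases Finset.eq_empty_or_nonempty J with rfl | hJne
    · simp
    obtain ⟨hEnm, hEnms⟩ := hen
    have hend' : ∀ s, play (applyMove D m) ms s = [] := hend
    cases m with
    | retrieve s =>
      exfalso
      obtain ⟨b, hlast, hmin⟩ := hEnm
      obtain ⟨j, hj⟩ := hJne
      have hjk := Finset.mem_Icc.1 (hJ hj)
      have hks0 := hk s0
      have hp := hpre j hj s0
      have hplen : ((C s0).take ((C s0).length - j + 1)).length
          = (C s0).length - j + 1 := by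
        rw [List.length_take]; omega
      have htD : (D s0)[it]? = some t := by
        refine pfx_getElem? hp ?_
        rw [take_getElem? (by omega)]
        exact hit
      have htmem : t ∈ D s0 := mem_of_getElem?' htD
      have hbt : b = t := le_antisymm (hmin s0 t htmem) (ht b)
      subst hbt
      have hbmem : b ∈ D s := List.mem_of_mem_getLast? hlast
      have hss : s = s0 := mem_stack_unique hcnt hbmem htmem
      rw [hss] at hlast
      have hlast' : (D s0)[(D s0).length - 1]? = some b := by
        rw [← List.getLast?_eq_getElem?]; exact hlast
      have hcount : (D s0).count b ≤ 1 := le_trans (count_le_cnt D s0 b) (hcnt b)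
      have hposeq := getElem?_unique hcount htD hlast'
      have hlen := hp.length_le
      rw [hplen] at hlen
      omega
    | relocate src dst =>
      obtain ⟨hne, hnnil⟩ := hEnm
      obtain ⟨b, hlast⟩ : ∃ b, (D src).getLast? = some b := by
        cases h : (D src).getLast? with
        | none => exact absurd (List.getLast?_eq_none_iff.1 h) hnnil
        | some c => exact ⟨c, rfl⟩
      have hsrc : applyMove D (.relocate src dst) src = (D src).dropLast :=
        relocate_src hne hlast
      have hdst : applyMove D (.relocate src dst) dst = D dst ++ [b] :=
        relocate_dst hne hlast
      have hoth : ∀ e, e ≠ src → e ≠ dst →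
          applyMove D (.relocate src dst) e = D e :=
        fun e h1 h2 => relocate_other h1 h2 hlast
      have hcnt' : ∀ x, cnt (applyMove D (.relocate src dst)) x ≤ 1 :=
        fun x => by rw [cnt_relocate hne hlast x]; exact hcnt x
      by_cases hcase : ∃ j ∈ J, (C src)[(C src).length - j]? = some b
      · -- the moved block is a protected layer block: this move is non-BG
        obtain ⟨j0, hj0, hv⟩ := hcase
        have hj0k := Finset.mem_Icc.1 (hJ hj0)
        have hksrc := hk src
        have hp0 := hpre j0 hj0 src
        have hp0len : ((C src).take ((C src).length - j0 + 1)).length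
            = (C src).length - j0 + 1 := by
          rw [List.length_take]; omega
        have hbD : (D src)[(C src).length - j0]? = some b := by
          refine pfx_getElem? hp0 ?_
          rw [take_getElem? (by omega)]
          exact hv
        have hlast' : (D src)[(D src).length - 1]? = some b := by
          rw [← List.getLast?_eq_getElem?]; exact hlast
        have hcountb : (D src).count b ≤ 1 := le_trans (count_le_cnt D src b) (hcnt b)
        have hposeq := getElem?_unique hcountb hbD hlast'
        have hlenge : (C src).length - j0 + 1 ≤ (D src).length := by
          have := hp0.length_le; rwa [hp0len] at this
        have hDlen : (D src).length = (C src).length - j0 + 1 := by omega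
        have hDsrc : D src = (C src).take ((C src).length - j0 + 1) :=
          (hp0.eq_of_length (by rw [hp0len, hDlen])).symm
        have hbTopK : b ∈ TopK C k := by
          have h5 : ((C src).drop ((C src).length - k))[k - j0]? = some b := by
            rw [List.getElem?_drop]
            have h6 : (C src).length - k + (k - j0) = (C src).length - j0 := by omega
            rw [h6]; exact hv
          exact ⟨src, mem_of_getElem?' h5⟩
        have hnonBG : ¬ MTypeOf D (Move.relocate src dst) b MType.BG := by
          rintro ⟨hbad, hnb⟩
          apply hnb
          obtain ⟨s1, a', ha'b, ia, ib, hiajb, hia, hib⟩ := hbad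
          have hs1 : s1 = src := mem_stack_unique hcnt (mem_of_getElem?' hib)
            (List.mem_of_mem_getLast? hlast)
          rw [hs1] at hia hib
          have hiaC : (C src)[ia]? = some a' := by
            rw [hDsrc] at hia
            exact pfx_getElem? (List.take_prefix _ _) hia
          have hibC : (C src)[ib]? = some b := by
            rw [hDsrc] at hib
            exact pfx_getElem? (List.take_prefix _ _) hib
          have hbadC : BadlyPlaced C b := ⟨src, a', ha'b, ia, ib, hiajb, hiaC, hibC⟩
          obtain ⟨a, haTake, hab⟩ := hcond b hbTopK hbadC dst
          obtain ⟨ia', hia'⟩ := List.mem_iff_getElem?.1 haTake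
          have hkdst := hk dst
          have hia'lt : ia' < (C dst).length - (k - 1) := by
            have h6 := (List.getElem?_eq_some_iff.1 hia').1
            rw [List.length_take] at h6
            omega
          have haC : (C dst)[ia']? = some a :=
            pfx_getElem? (List.take_prefix _ _) hia'
          have hpd := hpre j0 hj0 dst
          have hpdlen : ((C dst).take ((C dst).length - j0 + 1)).length
              = (C dst).length - j0 + 1 := by
            rw [List.length_take]; omega
          have haD : (D dst)[ia']? = some a := by
            refine pfx_getElem? hpd ?_
            rw [take_getElem? (by omega)]
            exact haC
          have hlenD : (C dst).length - j0 + 1 ≤ (D dst).length := by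
            have := hpd.length_le; rwa [hpdlen] at this
          refine ⟨dst, a, hab, ia', (D dst).length, by omega, ?_, ?_⟩
          · rw [hdst, List.getElem?_append_left (by omega)]
            exact haD
          · rw [hdst]
            exact List.getElem?_concat_length
        have hP : RelocNonBGIn (TopK C k) D (Move.relocate src dst) :=
          ⟨b, hbTopK, ⟨src, dst, rfl, hne, hlast⟩, hnonBG⟩
        have hpre' : ∀ j ∈ J.erase j0, ∀ e,
            (C e).take ((C e).length - j + 1) <+:
              (applyMove D (.relocate src dst)) e := by
          intro j hj e
          have hjJ := Finset.mem_of_mem_erase hj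
          have hjne := Finset.ne_of_mem_erase hj
          have hjk := Finset.mem_Icc.1 (hJ hjJ)
          by_cases he1 : e = src
          · subst he1
            have hple := (hpre j hjJ e).length_le
            rw [hDsrc, hp0len, List.length_take] at hple
            have hke := hk e
            have hjlt : j0 < j := by omega
            rw [hsrc, hDsrc]
            have hdl : ((C e).take ((C e).length - j0 + 1)).dropLast
                = (C e).take ((C e).length - j0) := by
              rw [List.dropLast_eq_take, hp0len, List.take_take]
              congr 1
              omega
            rw [hdl]
            exact take_prefix_take (by omega)
          · by_cases he2 : e = dst
            · subst he2
              rw [hdst]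
              exact (hpre j hjJ e).trans (List.prefix_append _ _)
            · rw [hoth e he1 he2]
              exact hpre j hjJ e
        have hIH := IH (J.erase j0) (fun j hj => hJ (Finset.mem_of_mem_erase hj))
          _ hcnt' hpre' hEnms hend'
        have hcard : J.card = (J.erase j0).card + 1 := by
          rw [Finset.card_erase_of_mem hj0]
          have := Finset.card_pos.2 hJne
          omega
        simp only [countMoves]
        rw [if_pos hP]
        omega
      · -- not a layer block: invariant fully preserved
        have hpre' : ∀ j ∈ J, ∀ e,
            (C e).take ((C e).length - j + 1) <+:
              (applyMove D (.relocate src dst)) e := by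
          intro j hj e
          have hjk := Finset.mem_Icc.1 (hJ hj)
          by_cases he1 : e = src
          · subst he1
            have hp := hpre j hj e
            have hke := hk e
            have hplen : ((C e).take ((C e).length - j + 1)).length
                = (C e).length - j + 1 := by
              rw [List.length_take]; omega
            have hstrict : ((C e).take ((C e).length - j + 1)).length
                < (D e).length := by
              rcases lt_or_eq_of_le hp.length_le with h | h
              · exact h
              · exfalso
                have hDsrc : D e = (C e).take ((C e).length - j + 1) :=
                  (hp.eq_of_length h).symm
                apply hcase
                refine ⟨j, hj, ?_⟩
                have hlen' : (D e).length = (C e).length - j + 1 := by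
                  rw [hDsrc, hplen]
                have h8 : (D e)[(D e).length - 1]? = some b := by
                  rw [← List.getLast?_eq_getElem?]; exact hlast
                rw [hlen', Nat.add_sub_cancel] at h8
                rw [hDsrc, take_getElem? (by omega)] at h8
                exact h8
            obtain ⟨r, hr⟩ := hp
            have hrne : r ≠ [] := by
              intro hr0
              rw [hr0, List.append_nil] at hr
              rw [← hr] at hstrict
              exact lt_irrefl _ hstrict
            rw [hsrc, ← hr, List.dropLast_append_of_ne_nil hrne]
            exact ⟨r.dropLast, rfl⟩
          · by_cases he2 : e = dst
            · subst he2
              rw [hdst]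
              exact (hpre j hj e).trans (List.prefix_append _ _)
            · rw [hoth e he1 he2]
              exact hpre j hj e
        have hIH := IH J hJ _ hcnt' hpre' hEnms hend'
        simp only [countMoves]
        exact le_trans hIH (Nat.le_add_left _ _)

end Key

/-- Property 3: if every stack holds at least `k` blocks, the
minimum-label (target) block `t` is not in the top `k` layers `𝔅³`, and every
badly placed block of `𝔅³` has a label strictly greater than the minimum label
remaining in stack `s` after deleting its topmost `k-1` blocks (for every `s`),
then every feasible move sequence contains at least `k` non-BG relocations of
blocks of `𝔅³`; that is, `f_nonBG(𝔅³) ≥ k`. -/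
theorem brp_property3 {B S : ℕ} (hS : 2 ≤ S) (hB : 1 ≤ B)
    (C : Config B S) (hC : IsConfig C)
    (k : ℕ) (hk : ∀ s, k ≤ (C s).length)
    (t : Fin B) (ht : ∀ b, t ≤ b) (htout : t ∉ TopK C k)
    (hcond : ∀ b ∈ TopK C k, BadlyPlaced C b →
      ∀ s : Fin S, ∃ a ∈ (C s).take ((C s).length - (k - 1)), a < b) :
    (∀ ms, Feasible C ms → k ≤ countMoves (RelocNonBGIn (TopK C k)) C ms) ∧
    k ≤ fNonBG C (TopK C k) := by
  have hcntC : ∀ x, cnt C x ≤ 1 := fun x => le_of_eq (hC x)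
  obtain ⟨s0, hs0⟩ : ∃ s, t ∈ C s := by
    by_contra h
    push_neg at h
    have h1 := hC t
    rw [Finset.sum_eq_zero (fun s _ => List.count_eq_zero.2 (h s))] at h1
    simp at h1
  obtain ⟨it, hit⟩ := List.mem_iff_getElem?.1 hs0
  have hitlen : it < (C s0).length := (List.getElem?_eq_some_iff.1 hit).1
  have hitlt : it < (C s0).length - k := by
    by_contra h
    push_neg at h
    apply htout
    have h5 : ((C s0).drop ((C s0).length - k))[it - ((C s0).length - k)]? = some t := by
      rw [List.getElem?_drop]
      have h6 : (C s0).length - k + (it - ((C s0).length - k)) = it := by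
        have := hk s0; omega
      rw [h6]; exact hit
    exact ⟨s0, mem_of_getElem?' h5⟩
  have part1 : ∀ ms, Feasible C ms → k ≤ countMoves (RelocNonBGIn (TopK C k)) C ms := by
    rintro ms ⟨hA, hE⟩
    have h9 := key_lemma C k hk t ht s0 it hit hitlt hcond ms (Finset.Icc 1 k)
      (Finset.Subset.refl _) C hcntC (fun j _ e => List.take_prefix _ _) hA hE
    rw [Nat.card_Icc] at h9
    omega
  refine ⟨part1, ?_⟩
  obtain ⟨ms0, hms0⟩ := exists_feasible hS (∑ s, (C s).length) C hcntC le_rfl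
  unfold fNonBG fMin
  refine le_csInf ⟨_, ms0, hms0, rfl⟩ ?_
  rintro n ⟨ms, hf, rfl⟩
  exact part1 ms hf
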